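/- Let N ≥ 4 be an integer and m > 1. For every σ with σ_c ≤ σ ≤ 2(N−3), where σ_c = 2(N−1)(m−1)/(3m+1), there exists no good profile with interface for the profile ODE. -/

import Mathlib

open Set

/-- One-sided derivative (on `[0,∞)`) of the `m`-th power of the profile. -/
noncomputable def Dm (m : ℝ) (f : ℝ → ℝ) : ℝ → ℝ :=
  derivWithin (fun ξ => f ξ ^ m) (Ici 0)

/-- Second one-sided derivative (on `[0,∞)`) of the `m`-th power of the profile. -/
noncomputable def D2m (m : ℝ) (f : ℝ → ℝ) : ℝ → ℝ :=
  derivWithin (Dm m f) (Ici 0)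

/-- A good profile for the ODE
`(f^m)'' + ((N-1)/ξ)(f^m)' - f/(m-1) + ξ^σ f^m = 0`:
a continuous nonnegative function on `[0,∞)` whose `m`-th power is twice
differentiable, solving the ODE wherever `f > 0`, and satisfying one of the
initial behaviors (P1), (P2), (P3). -/
structure GoodProfile (m σ N : ℝ) (f : ℝ → ℝ) : Prop where
  cont : ContinuousOn f (Ici 0)
  nonneg : ∀ ξ, 0 ≤ ξ → 0 ≤ f ξ
  diff1 : ∀ ξ, 0 ≤ ξ → DifferentiableWithinAt ℝ (fun ξ => f ξ ^ m) (Ici 0) ξ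
  diff2 : ∀ ξ, 0 ≤ ξ → DifferentiableWithinAt ℝ (Dm m f) (Ici 0) ξ
  ode : ∀ ξ, 0 < ξ → 0 < f ξ →
    D2m m f ξ + ((N - 1) / ξ) * Dm m f ξ - f ξ / (m - 1) + ξ ^ σ * f ξ ^ m = 0
  init : (0 < f 0 ∧ HasDerivWithinAt f 0 (Ici 0) 0)
    ∨ (f 0 = 0 ∧ Dm m f 0 = 0)
    ∨ (∃ ξ0 > (0:ℝ), f ξ0 = 0 ∧ Dm m f ξ0 = 0 ∧
        ∃ ε > (0:ℝ), ∀ ξ ∈ Ioo ξ0 (ξ0 + ε), 0 < f ξ)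

/-- A good profile has an interface at `η ∈ (0,∞)` if `f(η) = 0`, `(f^m)'(η) = 0`
and `f > 0` on a left-neighborhood of `η`. -/
def HasInterfaceAt (m : ℝ) (f : ℝ → ℝ) (η : ℝ) : Prop :=
  0 < η ∧ f η = 0 ∧ Dm m f η = 0 ∧ ∃ ε > (0:ℝ), ∀ ξ ∈ Ioo (η - ε) η, 0 < f ξ

/-- Theorem 1.2, non-existence part: for `N ≥ 4`, `m > 1` and
`σ_c ≤ σ ≤ 2(N-3)`, where `σ_c = 2(N-1)(m-1)/(3m+1)`, there is no good profile
with interface. -/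
lemma keyalg (Nr mr σr x T S G F W1 W2 A L L2 C2 K2 K3 p : ℝ)
    (hm1 : mr ≠ 1) (hm1' : mr + 1 ≠ 0) (hm0 : mr ≠ 0) (hx : x ≠ 0)
    (hA : A = Nr - 1 - σr/2) (hL : L = (A + σr)/2) (hL2 : L2 = L*(Nr - A)/2)
    (hC2 : C2 = mr/((mr+1)*(mr-1)))
    (hK2 : K2 = (σr*(mr+1) - A*(mr-1))/(2*((mr+1)*(mr-1))))
    (hK3 : K3 = L*(Nr - A)*(A-2)/2)
    (hp : p = (mr+1)/mr)
    (hW2 : W2 = F/(mr-1) - ((Nr-1)/x)*W1 - S*G) :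
    (A * (T*x^2) * W1^2 + (T*x^3) * (2 * W1 * W2))/2
    - C2 * (A * (T*x^2) * (G*F) + (T*x^3) * (W1 * p * F))
    + ((A+σr) * (T*x^2*S) * G^2 + (T*x^3*S) * (2 * G * W1))/2
    + L * (((A-1) * (T*x) * G + (T*x^2) * W1) * W1 + (T*x^2) * G * W2)
    + L2 * ((A-2) * T * G^2 + (T*x) * (2 * G * W1))
    = K2 * ((T*x^2) * (G*F)) + K3 * (T * G^2) := by
  subst hA hL hL2 hC2 hK2 hK3 hp hW2
  have hm1'' : mr - 1 ≠ 0 := sub_ne_zero.mpr hm1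
  field_simp
  ring

set_option maxHeartbeats 1600000 in
theorem no_goodProfile_with_interface_of_sigma_c_le
    (N : ℕ) (hN : 4 ≤ N) (m : ℝ) (hm : 1 < m) (σ : ℝ)
    (hσc : 2 * ((N : ℝ) - 1) * (m - 1) / (3 * m + 1) ≤ σ)
    (hσ2 : σ ≤ 2 * ((N : ℝ) - 3)) :
    ¬ ∃ f η, GoodProfile m σ (N : ℝ) f ∧ HasInterfaceAt m f η := by
  rintro ⟨f, η, gp, hη, hfη, hDmη, ε, hεpos, hfεpos⟩
  have hN4 : (4:ℝ) ≤ (N:ℝ) := by exact_mod_cast hN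
  have hm0 : (0:ℝ) < m := by linarith
  have hm1 : m - 1 ≠ 0 := by intro h; nlinarith
  have h3m : (0:ℝ) < 3*m + 1 := by linarith
  have hσpos : 0 < σ :=
    lt_of_lt_of_le (div_pos (by nlinarith) h3m) hσc
  set A : ℝ := (N:ℝ) - 1 - σ/2 with hA
  set L : ℝ := (A + σ)/2 with hL
  set L2 : ℝ := L * ((N:ℝ) - A)/2 with hL2
  set C2 : ℝ := m/((m+1)*(m-1)) with hC2
  set K2 : ℝ := (σ*(m+1) - A*(m-1))/(2*((m+1)*(m-1))) with hK2
  set K3 : ℝ := L * ((N:ℝ) - A)*(A-2)/2 with hK3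
  set p : ℝ := (m+1)/m with hp
  have hA2 : 2 ≤ A := by rw [hA]; linarith
  have hAN : A < (N:ℝ) := by rw [hA]; linarith
  have hLpos : 0 < L := by rw [hL]; linarith
  have hL2pos : 0 < L2 := by rw [hL2]; nlinarith
  have hppos : 0 < p := by rw [hp]; positivity
  have hp1 : 1 ≤ p := by rw [hp, le_div_iff₀ hm0]; linarith
  have hK2nn : 0 ≤ K2 := by
    have h := (div_le_iff₀ h3m).mp hσc
    rw [hK2, hA]
    apply div_nonneg _ (by nlinarith)
    nlinarith
  -- basic derivative facts
  have hgD : ∀ x : ℝ, 0 < x → HasDerivAt (fun ξ => f ξ ^ m) (Dm m f x) x := by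
    intro x hx
    have h1 := (gp.diff1 x hx.le).differentiableAt (Ici_mem_nhds hx)
    have h2 : Dm m f x = deriv (fun ξ => f ξ ^ m) x :=
      derivWithin_of_mem_nhds (Ici_mem_nhds hx)
    rw [h2]; exact h1.hasDerivAt
  have hdmD : ∀ x : ℝ, 0 < x → HasDerivAt (Dm m f) (D2m m f x) x := by
    intro x hx
    have h1 := (gp.diff2 x hx.le).differentiableAt (Ici_mem_nhds hx)
    have h2 : D2m m f x = deriv (Dm m f) x :=
      derivWithin_of_mem_nhds (Ici_mem_nhds hx)
    rw [h2]; exact h1.hasDerivAt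
  have hDm0 : ∀ x : ℝ, 0 < x → f x = 0 → Dm m f x = 0 := by
    intro x hx hfx
    have hloc : IsLocalMin (fun ξ => f ξ ^ m) x := by
      filter_upwards [Ici_mem_nhds hx] with y hy
      simp only [hfx, Real.zero_rpow hm0.ne']
      exact Real.rpow_nonneg (gp.nonneg y hy) m
    have h0 := hloc.deriv_eq_zero
    have h2 : Dm m f x = deriv (fun ξ => f ξ ^ m) x :=
      derivWithin_of_mem_nhds (Ici_mem_nhds hx)
    rw [h2, h0]
  -- the Pohozaev energy
  set E : ℝ → ℝ := fun x =>
      x ^ A * Dm m f x ^ 2 / 2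
      - C2 * (x ^ A * (f x ^ m) ^ p)
      + x ^ (A + σ) * (f x ^ m) ^ 2 / 2
      + L * (x ^ (A - 1) * (f x ^ m) * Dm m f x)
      + L2 * (x ^ (A - 2) * (f x ^ m) ^ 2) with hE
  have hEd : ∀ x : ℝ, 0 < x → HasDerivAt E (
      (A * x^(A-1) * Dm m f x ^ 2 + x^A * (2 * Dm m f x * D2m m f x))/2
      - C2 * (A * x^(A-1) * (f x ^ m)^p + x^A * (Dm m f x * p * (f x ^ m)^(p-1)))
      + ((A+σ) * x^(A+σ-1) * (f x ^ m)^2 + x^(A+σ) * (2 * (f x ^ m) * Dm m f x))/2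
      + L * (((A-1) * x^(A-2) * (f x ^ m) + x^(A-1) * Dm m f x) * Dm m f x
             + x^(A-1) * (f x ^ m) * D2m m f x)
      + L2 * ((A-2) * x^(A-3) * (f x ^ m)^2 + x^(A-2) * (2 * (f x ^ m) * Dm m f x))) x := by
    intro x hx
    have hxA : HasDerivAt (fun y : ℝ => y ^ A) (A * x ^ (A-1)) x :=
      Real.hasDerivAt_rpow_const (Or.inl hx.ne')
    have hxAσ : HasDerivAt (fun y : ℝ => y ^ (A+σ)) ((A+σ) * x ^ (A+σ-1)) x :=
      Real.hasDerivAt_rpow_const (Or.inl hx.ne')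
    have hxA1 : HasDerivAt (fun y : ℝ => y ^ (A-1)) ((A-1) * x ^ (A-1-1)) x :=
      Real.hasDerivAt_rpow_const (Or.inl hx.ne')
    have hxA2 : HasDerivAt (fun y : ℝ => y ^ (A-2)) ((A-2) * x ^ (A-2-1)) x :=
      Real.hasDerivAt_rpow_const (Or.inl hx.ne')
    have hg := hgD x hx
    have hw := hdmD x hx
    have hgp : HasDerivAt (fun y => (f y ^ m) ^ p)
        (Dm m f x * p * (f x ^ m) ^ (p-1)) x := hg.rpow_const (Or.inr hp1)
    have t1 := (hxA.mul (hw.pow 2)).div_const 2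
    have t2 := (hxA.mul hgp).const_mul C2
    have t3 := (hxAσ.mul (hg.pow 2)).div_const 2
    have t4 := ((hxA1.mul hg).mul hw).const_mul L
    have t5 := (hxA2.mul (hg.pow 2)).const_mul L2
    have h := (((t1.sub t2).add t3).add t4).add t5
    rw [hE]
    refine h.congr_deriv ?_
    rw [show A - 1 - 1 = A - 2 by ring, show A - 2 - 1 = A - 3 by ring]
    simp only [Pi.pow_apply, Pi.mul_apply]
    push_cast
    ring
  -- value of the derivative where f > 0, via the ODE
  have hEDval : ∀ x : ℝ, 0 < x → 0 < f x →
      (A * x^(A-1) * Dm m f x ^ 2 + x^A * (2 * Dm m f x * D2m m f x))/2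
      - C2 * (A * x^(A-1) * (f x ^ m)^p + x^A * (Dm m f x * p * (f x ^ m)^(p-1)))
      + ((A+σ) * x^(A+σ-1) * (f x ^ m)^2 + x^(A+σ) * (2 * (f x ^ m) * Dm m f x))/2
      + L * (((A-1) * x^(A-2) * (f x ^ m) + x^(A-1) * Dm m f x) * Dm m f x
             + x^(A-1) * (f x ^ m) * D2m m f x)
      + L2 * ((A-2) * x^(A-3) * (f x ^ m)^2 + x^(A-2) * (2 * (f x ^ m) * Dm m f x))
      = K2 * ((x^(A-3) * x^2) * (f x ^ m * f x)) + K3 * (x^(A-3) * (f x ^ m)^2) := by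
    intro x hx hfx
    have e3 : x ^ A = x ^ (A - 3) * x ^ (3:ℕ) := by
      rw [← Real.rpow_natCast x 3, ← Real.rpow_add hx]
      congr 1; push_cast; ring
    have e2 : x ^ (A-1) = x ^ (A - 3) * x ^ (2:ℕ) := by
      rw [← Real.rpow_natCast x 2, ← Real.rpow_add hx]
      congr 1; push_cast; ring
    have e1 : x ^ (A-2) = x ^ (A - 3) * x := by
      have h := Real.rpow_add hx (A-3) 1
      rw [Real.rpow_one] at h
      rw [← h]; congr 1; ring
    have es3 : x ^ (A+σ) = x ^ (A - 3) * x ^ (3:ℕ) * x ^ σ := by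
      rw [← Real.rpow_natCast x 3, ← Real.rpow_add hx, ← Real.rpow_add hx]
      congr 1; push_cast; ring
    have es2 : x ^ (A+σ-1) = x ^ (A - 3) * x ^ (2:ℕ) * x ^ σ := by
      rw [← Real.rpow_natCast x 2, ← Real.rpow_add hx, ← Real.rpow_add hx]
      congr 1; push_cast; ring
    have hGp : (f x ^ m) ^ p = f x ^ m * f x := by
      rw [← Real.rpow_mul (gp.nonneg x hx.le)]
      have hmp : m * p = m + 1 := by rw [hp]; field_simp
      rw [hmp, Real.rpow_add hfx, Real.rpow_one]
    have hGp1 : (f x ^ m) ^ (p-1) = f x := by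
      rw [← Real.rpow_mul (gp.nonneg x hx.le)]
      have hmp : m * (p-1) = 1 := by rw [hp]; field_simp; ring
      rw [hmp, Real.rpow_one]
    have hW2 : D2m m f x = f x/(m-1) - (((N:ℝ)-1)/x) * Dm m f x - x^σ * (f x ^ m) := by
      have h := gp.ode x hx hfx
      linarith
    rw [hGp, hGp1, e3, e2, e1, es3, es2]
    linear_combination keyalg (N:ℝ) m σ x (x^(A-3)) (x^σ) (f x ^ m) (f x)
      (Dm m f x) (D2m m f x) A L L2 C2 K2 K3 p
      hm.ne' (by positivity) hm0.ne' hx.ne' hA hL hL2 hC2 hK2 hK3 hp hW2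
  have hK3nn : 0 ≤ K3 := by
    rw [hK3]
    have h1 : (0:ℝ) ≤ (N:ℝ) - A := by linarith
    have h2 : (0:ℝ) ≤ A - 2 := by linarith
    have := hLpos.le
    positivity
  -- nonnegativity of the derivative on (0, η)
  have hED0 : ∀ x : ℝ, 0 < x → 0 ≤
      (A * x^(A-1) * Dm m f x ^ 2 + x^A * (2 * Dm m f x * D2m m f x))/2
      - C2 * (A * x^(A-1) * (f x ^ m)^p + x^A * (Dm m f x * p * (f x ^ m)^(p-1)))
      + ((A+σ) * x^(A+σ-1) * (f x ^ m)^2 + x^(A+σ) * (2 * (f x ^ m) * Dm m f x))/2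
      + L * (((A-1) * x^(A-2) * (f x ^ m) + x^(A-1) * Dm m f x) * Dm m f x
             + x^(A-1) * (f x ^ m) * D2m m f x)
      + L2 * ((A-2) * x^(A-3) * (f x ^ m)^2 + x^(A-2) * (2 * (f x ^ m) * Dm m f x)) := by
    intro x hx
    by_cases hfx : 0 < f x
    · rw [hEDval x hx hfx]
      have T1 : (0:ℝ) ≤ x^(A-3) := (Real.rpow_pos_of_pos hx _).le
      have T2 : (0:ℝ) ≤ f x ^ m := (Real.rpow_pos_of_pos hfx m).le
      have := hfx.le
      positivity
    · have hfx0 : f x = 0 := le_antisymm (not_lt.mp hfx) (gp.nonneg x hx.le)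
      have hfm : f x ^ m = 0 := by rw [hfx0]; exact Real.zero_rpow hm0.ne'
      have hdm0 := hDm0 x hx hfx0
      rw [hfm, hdm0]
      simp [Real.zero_rpow hppos.ne']
  -- continuity of E on [0, η]
  have hEcont : ContinuousOn E (Icc 0 η) := by
    have hsub : Icc (0:ℝ) η ⊆ Ici 0 := Icc_subset_Ici_self
    have hgc : ContinuousOn (fun x => f x ^ m) (Icc 0 η) :=
      fun x hx => ((gp.diff1 x hx.1).continuousWithinAt).mono hsub
    have hdc : ContinuousOn (Dm m f) (Icc 0 η) :=
      fun x hx => ((gp.diff2 x hx.1).continuousWithinAt).mono hsub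
    have hrp : ∀ b : ℝ, 0 ≤ b → ContinuousOn (fun x : ℝ => x ^ b) (Icc 0 η) :=
      fun b hb x _ => (Real.continuousAt_rpow_const x b (Or.inr hb)).continuousWithinAt
    have hgpc : ContinuousOn (fun x => (f x ^ m) ^ p) (Icc 0 η) := fun x hx =>
      (Real.continuousAt_rpow_const _ p (Or.inr hppos.le)).comp_continuousWithinAt (hgc x hx)
    have c1 : ContinuousOn (fun x : ℝ => x ^ A * Dm m f x ^ 2 / 2) (Icc 0 η) :=
      ((hrp A (by linarith)).mul (hdc.pow 2)).div_const 2
    have c2 : ContinuousOn (fun x : ℝ => C2 * (x ^ A * (f x ^ m) ^ p)) (Icc 0 η) :=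
      continuousOn_const.mul ((hrp A (by linarith)).mul hgpc)
    have c3 : ContinuousOn (fun x : ℝ => x ^ (A+σ) * (f x ^ m) ^ 2 / 2) (Icc 0 η) :=
      ((hrp (A+σ) (by linarith)).mul (hgc.pow 2)).div_const 2
    have c4 : ContinuousOn (fun x : ℝ => L * (x ^ (A-1) * (f x ^ m) * Dm m f x)) (Icc 0 η) :=
      continuousOn_const.mul (((hrp (A-1) (by linarith)).mul hgc).mul hdc)
    have c5 : ContinuousOn (fun x : ℝ => L2 * (x ^ (A-2) * (f x ^ m) ^ 2)) (Icc 0 η) :=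
      continuousOn_const.mul ((hrp (A-2) (by linarith)).mul (hgc.pow 2))
    rw [hE]
    exact (((c1.sub c2).add c3).add c4).add c5
  -- boundary values
  have hgη : f η ^ m = 0 := by rw [hfη]; exact Real.zero_rpow hm0.ne'
  have hEη : E η = 0 := by
    rw [hE]
    simp [hgη, hDmη, Real.zero_rpow hppos.ne']
  have hE0 : 0 ≤ E 0 := by
    have hE0eq : E 0 = (0:ℝ)^A * Dm m f 0 ^ 2 / 2
        - C2 * ((0:ℝ)^A * (f 0 ^ m) ^ p)
        + (0:ℝ)^(A+σ) * (f 0 ^ m)^2/2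
        + L * ((0:ℝ)^(A-1) * (f 0 ^ m) * Dm m f 0)
        + L2 * ((0:ℝ)^(A-2) * (f 0 ^ m)^2) := rfl
    have z1 : (0:ℝ)^A = 0 := Real.zero_rpow (by linarith)
    have z2 : (0:ℝ)^(A+σ) = 0 := Real.zero_rpow (by linarith)
    have z3 : (0:ℝ)^(A-1) = 0 := Real.zero_rpow (by linarith)
    have z4 : (0:ℝ) ≤ (0:ℝ)^(A-2) := Real.rpow_nonneg le_rfl _
    rw [hE0eq, z1, z2, z3]
    have h5 : 0 ≤ L2 * ((0:ℝ)^(A-2) * (f 0 ^ m)^2) :=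
      mul_nonneg hL2pos.le (mul_nonneg z4 (sq_nonneg _))
    nlinarith [h5]
  -- E is monotone on [0, η]
  have hmono : MonotoneOn E (Icc 0 η) := by
    refine monotoneOn_of_deriv_nonneg (convex_Icc 0 η) hEcont ?_ ?_
    · intro x hx
      rw [interior_Icc] at hx
      exact ((hEd x hx.1).differentiableAt).differentiableWithinAt
    · intro x hx
      rw [interior_Icc] at hx
      rw [(hEd x hx.1).deriv]
      exact hED0 x hx.1
  have hE00 : E 0 = 0 := by
    have h0η : E 0 ≤ E η :=
      hmono (left_mem_Icc.mpr hη.le) (right_mem_Icc.mpr hη.le) hη.le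
    rw [hEη] at h0η
    linarith
  have hEzero : ∀ x ∈ Icc (0:ℝ) η, E x = 0 := by
    intro x hx
    have l1 : E x ≤ E η := hmono hx (right_mem_Icc.mpr hη.le) hx.2
    have l2 : E 0 ≤ E x := hmono (left_mem_Icc.mpr hη.le) hx hx.1
    rw [hEη] at l1; rw [hE00] at l2
    linarith
  -- pick a point near the interface where f > 0
  set ξ₀ : ℝ := max (η - ε/2) (η/2) with hξ₀
  have hξpos : 0 < ξ₀ := lt_max_of_lt_right (half_pos hη)
  have hξlt : ξ₀ < η := max_lt (by linarith) (by linarith)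
  have hξgt : η - ε < ξ₀ := lt_max_of_lt_left (by linarith)
  have hfξ : 0 < f ξ₀ := hfεpos ξ₀ ⟨hξgt, hξlt⟩
  have hEeq : ∀ᶠ y in nhds ξ₀, E y = 0 := by
    filter_upwards [Ioo_mem_nhds hξpos hξlt] with y hy
    exact hEzero y ⟨hy.1.le, hy.2.le⟩
  have hE0d : HasDerivAt E 0 ξ₀ :=
    (hasDerivAt_const ξ₀ (0:ℝ)).congr_of_eventuallyEq hEeq
  have hval := (hEd ξ₀ hξpos).unique hE0d
  rw [hEDval ξ₀ hξpos hfξ] at hval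
  have T1 : (0:ℝ) < ξ₀^(A-3) := Real.rpow_pos_of_pos hξpos _
  have T2 : (0:ℝ) < f ξ₀ ^ m := Real.rpow_pos_of_pos hfξ m
  rcases eq_or_lt_of_le hK2nn with hK2z | hK2p
  · -- critical case: K2 = 0 forces σ = σ_c, hence A > 2 and K3 > 0
    have hσeq : σ*(m+1) - A*(m-1) = 0 := by
      have hd : (0:ℝ) < 2*((m+1)*(m-1)) := by nlinarith
      have h := hK2z.symm
      rw [hK2, div_eq_zero_iff] at h
      rcases h with h | h
      · exact h
      · exfalso; rw [h] at hd; exact lt_irrefl 0 hd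
    have hA2' : 2 < A := by
      rw [hA] at hσeq ⊢
      nlinarith
    have hK3p : 0 < K3 := by
      rw [hK3]
      apply div_pos (mul_pos (mul_pos hLpos (by linarith)) (by linarith)) (by norm_num)
    rw [← hK2z] at hval
    nlinarith [mul_pos T1 (pow_pos T2 2)]
  · have pos1 : 0 < K2 * ((ξ₀^(A-3) * ξ₀^2) * (f ξ₀ ^ m * f ξ₀)) :=
      mul_pos hK2p (mul_pos (mul_pos T1 (pow_pos hξpos 2)) (mul_pos T2 hfξ))
    have pos2 : 0 ≤ K3 * (ξ₀^(A-3) * (f ξ₀ ^ m)^2) :=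
      mul_nonneg hK3nn (mul_nonneg T1.le (sq_nonneg _))
    linarith
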